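/- Let G be a simple graph on a finite vertex type V and C a simple graph on a finite vertex type W, and let G ⊔ C denote their disjoint union on the sum type V ⊕ W. Let Orb(G ⊔ C, W) = {σ(S_W) : σ ∈ Aut(G ⊔ C)} denote the orbit of the W-side vertex set S_W under the setwise action of Aut(G ⊔ C) on vertex sets. Then |Orb(G ⊔ C, W)| · |Aut(G)| · |Aut(C)| = |Aut(G ⊔ C)|. -/

import Mathlib

/-- The automorphism group of a simple graph `G`, as a subgroup of the
permutation group of its vertex type. -/
def SimpleGraph.autGroup {V : Type*} (G : SimpleGraph V) : Subgroup (Equiv.Perm V) where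
  carrier := {π | ∀ a b, G.Adj (π a) (π b) ↔ G.Adj a b}
  one_mem' := fun _ _ => Iff.rfl
  mul_mem' := by
    intro π σ hπ hσ a b
    simpa [Equiv.Perm.mul_apply] using (hπ (σ a) (σ b)).trans (hσ a b)
  inv_mem' := by
    intro π hπ a b
    conv_rhs => rw [← π.apply_symm_apply a, ← π.apply_symm_apply b]
    exact (hπ _ _).symm

open Pointwise MulAction in
/-- With `S_W` the `W`-side vertex set of the disjoint union
`G ⊕g C`, the orbit of `S_W` under the setwise action of `Aut(G ⊕g C)`
satisfies `|Orb(G ⊕g C, W)| * |Aut(G)| * |Aut(C)| = |Aut(G ⊕g C)|`. -/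
theorem card_orb_mul_aut_mul_aut_eq_aut_sum {V W : Type*} [Fintype V] [Fintype W]
    (G : SimpleGraph V) (C : SimpleGraph W) :
    Nat.card {S : Set (V ⊕ W) | ∃ σ ∈ (G ⊕g C).autGroup,
        σ '' Set.range (Sum.inr : W → V ⊕ W) = S} *
      Nat.card G.autGroup * Nat.card C.autGroup =
    Nat.card (G ⊕g C).autGroup := by
  classical
  set H := (G ⊕g C).autGroup with hH
  set SW : Set (V ⊕ W) := Set.range (Sum.inr : W → V ⊕ W) with hSW
  -- the statement's set is the orbit
  have horb : {S : Set (V ⊕ W) | ∃ σ ∈ H, σ '' SW = S} = orbit H SW := by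
    ext S
    constructor
    · rintro ⟨σ, hσ, rfl⟩
      exact ⟨⟨σ, hσ⟩, rfl⟩
    · rintro ⟨⟨σ, hσ⟩, rfl⟩
      exact ⟨σ, hσ, rfl⟩
  -- the stabilizer is equivalent to the product of aut groups
  have key : Nat.card (stabilizer H SW) = Nat.card G.autGroup * Nat.card C.autGroup := by
    rw [← Nat.card_prod]
    refine (Nat.card_congr (Equiv.ofBijective ?_ ⟨?_, ?_⟩)).symm
    · refine fun p : G.autGroup × C.autGroup =>
        ⟨⟨Equiv.sumCongr p.1.1 p.2.1, ?_⟩, ?_⟩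
      · intro a b
        cases a <;> cases b <;> simp [p.1.2 _, p.2.2 _]
      · show _ • SW = SW
        ext x
        simp only [hSW]
        constructor
        · rintro ⟨_, ⟨w, rfl⟩, rfl⟩
          exact ⟨p.2.1 w, rfl⟩
        · rintro ⟨w, rfl⟩
          exact ⟨Sum.inr (p.2.1.symm w), ⟨_, rfl⟩, by simp⟩
    · rintro ⟨⟨π₁, h₁⟩, ⟨π₂, h₂⟩⟩ ⟨⟨τ₁, g₁⟩, ⟨τ₂, g₂⟩⟩ h
      have hp : Equiv.Perm.sumCongrHom V W (π₁, π₂) = Equiv.Perm.sumCongrHom V W (τ₁, τ₂) :=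
        congrArg Subtype.val (congrArg Subtype.val h)
      have := Equiv.Perm.sumCongrHom_injective hp
      simp only [Prod.mk.injEq] at this
      exact Prod.ext (Subtype.ext this.1) (Subtype.ext this.2)
    · rintro ⟨⟨σ, hσ⟩, hst⟩
      have hst' : σ '' SW = SW := hst
      -- σ maps inl side to inl side
      have hmaps : Set.MapsTo σ (Set.range (Sum.inl : V → V ⊕ W))
          (Set.range (Sum.inl : V → V ⊕ W)) := by
        rintro _ ⟨v, rfl⟩
        rcases h : σ (Sum.inl v) with x | w
        · exact ⟨x, rfl⟩
        · exfalso
          have : Sum.inr w ∈ σ '' SW := hst'.symm ▸ ⟨w, rfl⟩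
          obtain ⟨_, ⟨w', rfl⟩, hw'⟩ := this
          have := σ.injective (hw'.trans h.symm)
          cases this
      obtain ⟨⟨π, τ⟩, hπτ⟩ := Equiv.Perm.mem_sumCongrHom_range_of_perm_mapsTo_inl hmaps
      have hπτ' : Equiv.sumCongr π τ = σ := hπτ
      refine ⟨⟨⟨π, ?_⟩, ⟨τ, ?_⟩⟩, ?_⟩
      · intro a b
        have := hσ (Sum.inl a) (Sum.inl b)
        rw [← hπτ'] at this
        simpa using this
      · intro a b
        have := hσ (Sum.inr a) (Sum.inr b)
        rw [← hπτ'] at this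
        simpa using this
      · exact Subtype.ext (Subtype.ext hπτ')
  rw [horb, mul_assoc, ← key, ← Nat.card_prod]
  exact Nat.card_congr (orbitProdStabilizerEquivGroup H SW)
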